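/- Let T: ℂⁿ → ℂⁿ be a self-adjoint linear map annihilating a unit vector v. For each unit vector f ∈ ℂⁿ, let Δ_T(f) be the determinant of the quadratic form w ↦ ⟨Tw, w⟩ restricted to the orthogonal complement of f. Then |⟨v, f⟩|² · Δ_T(v) = Δ_T(f). -/

import Mathlib

open Matrix

noncomputable def extONB {n : ℕ} (v : EuclideanSpace ℂ (Fin (n+1))) (hv : ‖v‖ = 1)
    (bv : OrthonormalBasis (Fin n) ℂ ((ℂ ∙ v)ᗮ : Submodule ℂ (EuclideanSpace ℂ (Fin (n+1))))) :
    OrthonormalBasis (Unit ⊕ Fin n) ℂ (EuclideanSpace ℂ (Fin (n+1))) := by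
  refine OrthonormalBasis.mk (v := Sum.elim (fun _ => v) (fun p => (bv p : EuclideanSpace ℂ (Fin (n+1))))) ?_ ?_
  · rw [orthonormal_iff_ite]
    rintro (i | p) (j | q)
    · simpa [inner_self_eq_norm_sq_to_K, hv] using rfl
    · simp only [Sum.elim_inl, Sum.elim_inr, Sum.inl.injEq, if_neg (by simp : ¬ (Sum.inl i : Unit ⊕ Fin n) = Sum.inr q)]
      exact ((bv q).2 v (Submodule.mem_span_singleton_self v))
    · simp only [Sum.elim_inl, Sum.elim_inr, if_neg (by simp : ¬ (Sum.inr p : Unit ⊕ Fin n) = Sum.inl j)]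
      rw [← inner_conj_symm]
      rw [(bv p).2 v (Submodule.mem_span_singleton_self v)]
      simp
    · have := orthonormal_iff_ite.mp bv.orthonormal p q
      simp only [Sum.elim_inr, Sum.inr.injEq]
      rw [← Submodule.coe_inner] at *
      simpa using this
  · rw [top_le_iff, ← Submodule.sup_orthogonal_of_hasOrthogonalProjection (K := (ℂ ∙ v))]
    have h1 : Set.range (Sum.elim (fun _ : Unit => v) (fun p => (bv p : EuclideanSpace ℂ (Fin (n+1)))))
        = {v} ∪ (Subtype.val '' Set.range bv) := by
      rw [Sum.range_eq]
      congr 1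
      · exact Set.range_const
      · ext x; simp
    rw [h1, Submodule.span_union]
    congr 1
    have h2 : (Subtype.val '' Set.range ⇑bv)
        = (⇑(((ℂ ∙ v)ᗮ : Submodule ℂ (EuclideanSpace ℂ (Fin (n+1)))).subtype) '' Set.range ⇑bv) := rfl
    rw [h2, Submodule.span_image]
    have : Submodule.span ℂ (Set.range bv) = ⊤ := by
      have := bv.toBasis.span_eq
      rwa [bv.coe_toBasis] at this
    rw [this, Submodule.map_top, Submodule.range_subtype]

lemma extONB_apply_inl {n : ℕ} (v : EuclideanSpace ℂ (Fin (n+1))) (hv : ‖v‖ = 1)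
    (bv : OrthonormalBasis (Fin n) ℂ ((ℂ ∙ v)ᗮ : Submodule ℂ (EuclideanSpace ℂ (Fin (n+1)))))
    (u : Unit) : extONB v hv bv (Sum.inl u) = v := by
  rw [extONB, OrthonormalBasis.coe_mk]
  rfl

lemma extONB_apply_inr {n : ℕ} (v : EuclideanSpace ℂ (Fin (n+1))) (hv : ‖v‖ = 1)
    (bv : OrthonormalBasis (Fin n) ℂ ((ℂ ∙ v)ᗮ : Submodule ℂ (EuclideanSpace ℂ (Fin (n+1)))))
    (p : Fin n) : extONB v hv bv (Sum.inr p) = (bv p : EuclideanSpace ℂ (Fin (n+1))) := by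
  rw [extONB, OrthonormalBasis.coe_mk]
  rfl

lemma adj_corner {R : Type*} [CommRing R] {n : ℕ}
    (A : Matrix (Unit ⊕ Fin n) (Unit ⊕ Fin n) R) :
    adjugate A (Sum.inl ()) (Sum.inl ()) =
      (Matrix.of fun p q : Fin n => A (Sum.inr p) (Sum.inr q)).det := by
  rw [adjugate_apply]
  have h : A.updateRow (Sum.inl ()) (Pi.single (Sum.inl ()) 1) =
      Matrix.fromBlocks 1 0
        (Matrix.of fun (p : Fin n) (_ : Unit) => A (Sum.inr p) (Sum.inl ()))
        (Matrix.of fun p q : Fin n => A (Sum.inr p) (Sum.inr q)) := by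
    ext i j
    rcases i with i | p <;> rcases j with j | q <;>
      simp [Matrix.updateRow_apply, Pi.single_apply, Matrix.one_apply]
  rw [h, Matrix.det_fromBlocks_zero₁₂, Matrix.det_one, one_mul]

/-- Coordinate-free eigenvector-eigenvalue identity (Berndtsson). -/
theorem coordinate_free_eigenvector_eigenvalue {n : ℕ}
    (T : EuclideanSpace ℂ (Fin (n+1)) →ₗ[ℂ] EuclideanSpace ℂ (Fin (n+1)))
    (hT : T.IsSymmetric)
    (v : EuclideanSpace ℂ (Fin (n+1))) (hv : ‖v‖ = 1) (hTv : T v = 0)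
    (f : EuclideanSpace ℂ (Fin (n+1))) (hf : ‖f‖ = 1)
    (bv : OrthonormalBasis (Fin n) ℂ ((ℂ ∙ v)ᗮ : Submodule ℂ (EuclideanSpace ℂ (Fin (n+1)))))
    (bf : OrthonormalBasis (Fin n) ℂ ((ℂ ∙ f)ᗮ : Submodule ℂ (EuclideanSpace ℂ (Fin (n+1))))) :
    (‖(inner ℂ v f : ℂ)‖ : ℂ) ^ 2 *
        (Matrix.of fun p q : Fin n => (inner ℂ (T ((bv p : EuclideanSpace ℂ (Fin (n+1)))))
          ((bv q : EuclideanSpace ℂ (Fin (n+1)))) : ℂ)).det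
      = (Matrix.of fun p q : Fin n => (inner ℂ (T ((bf p : EuclideanSpace ℂ (Fin (n+1)))))
          ((bf q : EuclideanSpace ℂ (Fin (n+1)))) : ℂ)).det := by
  classical
  set E := extONB v hv bv with hE
  set G := extONB f hf bf with hG
  set i0 : Unit ⊕ Fin n := Sum.inl () with hi0
  set M := LinearMap.toMatrix E.toBasis E.toBasis T with hMdef
  set M' := LinearMap.toMatrix G.toBasis G.toBasis T with hM'def
  have hMapp : ∀ (b : OrthonormalBasis (Unit ⊕ Fin n) ℂ (EuclideanSpace ℂ (Fin (n+1))))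
      (i j : Unit ⊕ Fin n), LinearMap.toMatrix b.toBasis b.toBasis T i j
        = (inner ℂ (b i) (T (b j)) : ℂ) := by
    intro b i j
    rw [LinearMap.toMatrix_apply, OrthonormalBasis.coe_toBasis_repr_apply,
      OrthonormalBasis.repr_apply_apply, OrthonormalBasis.coe_toBasis]
  have hrow : ∀ j, M i0 j = 0 := by
    intro j
    rw [hMdef, hMapp, hi0, extONB_apply_inl, ← hT, hTv, inner_zero_left]
  have hcol : ∀ i, M i i0 = 0 := by
    intro i
    rw [hMdef, hMapp, hi0, extONB_apply_inl, hTv, inner_zero_right]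
  have hadj1 : ∀ (k : Unit ⊕ Fin n) (q : Fin n), M.adjugate k (Sum.inr q) = 0 := by
    intro k q
    rw [Matrix.adjugate_apply]
    apply Matrix.det_eq_zero_of_row_eq_zero i0
    intro j
    rw [Matrix.updateRow_apply, if_neg (by simp [hi0])]
    exact hrow j
  have hadj2 : ∀ p : Fin n, M.adjugate (Sum.inr p) i0 = 0 := by
    intro p
    rw [Matrix.adjugate_apply]
    apply Matrix.det_eq_zero_of_column_eq_zero i0
    intro i
    rw [Matrix.updateRow_apply]
    split
    · rw [Pi.single_apply, if_neg (by simp [hi0])]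
    · exact hcol i
  set P := E.toBasis.toMatrix G.toBasis with hP
  have hPuni : Pᴴ * P = 1 := E.toMatrix_orthonormalBasis_conjTranspose_mul_self G
  have hPuni' : P * Pᴴ = 1 := E.toMatrix_orthonormalBasis_self_mul_conjTranspose G
  have hQ : G.toBasis.toMatrix E.toBasis = Pᴴ := by
    have h := E.toBasis.toMatrix_mul_toMatrix_flip G.toBasis
    calc G.toBasis.toMatrix E.toBasis = 1 * G.toBasis.toMatrix E.toBasis := (one_mul _).symm
      _ = Pᴴ * P * G.toBasis.toMatrix E.toBasis := by rw [hPuni]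
      _ = Pᴴ * (P * G.toBasis.toMatrix E.toBasis) := Matrix.mul_assoc _ _ _
      _ = Pᴴ := by rw [h, Matrix.mul_one]
  have hM' : M' = Pᴴ * M * P := by
    rw [hM'def, hMdef, hP, ← hQ,
      basis_toMatrix_mul_linearMap_toMatrix_mul_basis_toMatrix]
  have hdet : P.det * Pᴴ.det = 1 := by
    rw [← Matrix.det_mul, hPuni', Matrix.det_one]
  have hadjP : P.adjugate = P.det • Pᴴ := by
    calc P.adjugate = P.adjugate * (P * Pᴴ) := by rw [hPuni', Matrix.mul_one]
      _ = P.adjugate * P * Pᴴ := (Matrix.mul_assoc _ _ _).symm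
      _ = P.det • Pᴴ := by rw [Matrix.adjugate_mul, Matrix.smul_mul, Matrix.one_mul]
  have hadjPH : Pᴴ.adjugate = Pᴴ.det • P := by
    calc Pᴴ.adjugate = Pᴴ.adjugate * (Pᴴ * P) := by rw [hPuni, Matrix.mul_one]
      _ = Pᴴ.adjugate * Pᴴ * P := (Matrix.mul_assoc _ _ _).symm
      _ = Pᴴ.det • P := by rw [Matrix.adjugate_mul, Matrix.smul_mul, Matrix.one_mul]
  have hadjM' : M'.adjugate = Pᴴ * M.adjugate * P := by
    rw [hM', Matrix.adjugate_mul_distrib, Matrix.adjugate_mul_distrib, hadjP, hadjPH]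
    simp only [Matrix.smul_mul, Matrix.mul_smul, smul_smul]
    rw [mul_comm Pᴴ.det, hdet, one_smul, Matrix.mul_assoc]
  have hPvf : P i0 i0 = (inner ℂ v f : ℂ) := by
    rw [hP, Module.Basis.toMatrix_apply, OrthonormalBasis.coe_toBasis,
      OrthonormalBasis.coe_toBasis_repr_apply, OrthonormalBasis.repr_apply_apply,
      hi0, hE, hG, extONB_apply_inl, extONB_apply_inl]
  have hMv : (Matrix.of fun p q : Fin n => (inner ℂ (T ((bv p : EuclideanSpace ℂ (Fin (n+1)))))
      ((bv q : EuclideanSpace ℂ (Fin (n+1)))) : ℂ)).det = M.adjugate i0 i0 := by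
    rw [hi0, adj_corner]
    congr 1
    ext p q
    rw [Matrix.of_apply, Matrix.of_apply, hMdef, hMapp, hE, extONB_apply_inr, extONB_apply_inr]
    exact hT _ _
  have hMf : (Matrix.of fun p q : Fin n => (inner ℂ (T ((bf p : EuclideanSpace ℂ (Fin (n+1)))))
      ((bf q : EuclideanSpace ℂ (Fin (n+1)))) : ℂ)).det = M'.adjugate i0 i0 := by
    rw [hi0, adj_corner]
    congr 1
    ext p q
    rw [Matrix.of_apply, Matrix.of_apply, hM'def, hMapp, hG, extONB_apply_inr, extONB_apply_inr]
    exact hT _ _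
  have hsum : (Pᴴ * M.adjugate * P) i0 i0 = Pᴴ i0 i0 * M.adjugate i0 i0 * P i0 i0 := by
    rw [Matrix.mul_apply, Finset.sum_eq_single i0]
    · rw [Matrix.mul_apply, Finset.sum_eq_single i0]
      · rintro (u | p) - hk
        · exact absurd rfl hk
        · rw [hadj2 p, mul_zero]
      · intro h; exact absurd (Finset.mem_univ i0) h
    · rintro (u | q) - hk
      · exact absurd rfl hk
      · have : (Pᴴ * M.adjugate) i0 (Sum.inr q) = 0 := by
          rw [Matrix.mul_apply]
          exact Finset.sum_eq_zero fun l _ => by rw [hadj1, mul_zero]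
        rw [this, zero_mul]
    · intro h; exact absurd (Finset.mem_univ i0) h
  rw [hMv, hMf, hadjM', hsum, Matrix.conjTranspose_apply, hPvf]
  have hz : star (inner ℂ v f : ℂ) * M.adjugate i0 i0 * (inner ℂ v f : ℂ)
      = ((starRingEnd ℂ) (inner ℂ v f : ℂ) * (inner ℂ v f : ℂ)) * M.adjugate i0 i0 := by
    rw [RCLike.star_def]; ring
  rw [hz, RCLike.conj_mul]
  norm_num
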